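/- Fix a real number z ≥ 2. Then the sequence n ↦ S_n(z)/S_{n-1}(z) is strictly decreasing in n over the positive integers; that is, for all n ≥ 1, S_{n+1}(z)/S_n(z) < S_n(z)/S_{n-1}(z). -/

import Mathlib

/-- Fix `z ≥ 2`. Then `n ↦ S n z / S (n-1) z` is strictly decreasing over the
positive integers: for `n ≥ 1`, `S (n+1) z / S n z < S n z / S (n-1) z`. -/
theorem chebyshev_ratio_strict_anti (z : ℝ) (hz : 2 ≤ z) (S : ℤ → ℝ)
    (h0 : S 0 = 1) (h1 : S 1 = z)
    (hrec : ∀ j : ℤ, S j = z * S (j - 1) - S (j - 2)) :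
    ∀ n : ℤ, 1 ≤ n → S (n + 1) / S n < S n / S (n - 1) := by
  have hrec' : ∀ j : ℤ, S (j + 2) = z * S (j + 1) - S j := by
    intro j
    have h := hrec (j + 2)
    have e1 : j + 2 - 1 = j + 1 := by ring
    have e2 : j + 2 - 2 = j := by ring
    rw [e1, e2] at h
    exact h
  have hpos : ∀ n : ℤ, 0 ≤ n → 1 ≤ S n ∧ S n ≤ S (n + 1) := by
    intro n
    refine Int.le_induction (motive := fun k _ => 1 ≤ S k ∧ S k ≤ S (k + 1)) (m := 0) ?_ ?_ n
    · refine ⟨le_of_eq h0.symm, ?_⟩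
      rw [h0, show (0:ℤ)+1 = 1 from rfl, h1]; linarith
    · intro n hn ih
      obtain ⟨ih1, ih2⟩ := ih
      have hr := hrec' n
      have hS1 : (1:ℝ) ≤ S (n + 1) := le_trans ih1 ih2
      refine ⟨hS1, ?_⟩
      have hmul : 2 * S (n + 1) ≤ z * S (n + 1) := by nlinarith
      have e : n + 1 + 1 = n + 2 := by ring
      rw [e, hr]; linarith
  have hdet : ∀ n : ℤ, 1 ≤ n → S (n + 1) * S (n - 1) - S n * S n = -1 := by
    intro n
    refine Int.le_induction (motive := fun k _ => S (k + 1) * S (k - 1) - S k * S k = -1) (m := 1) ?_ ?_ n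
    · have h2 := hrec' 0
      simp only [zero_add] at h2
      show S (1 + 1) * S (1 - 1) - S 1 * S 1 = -1
      norm_num
      rw [h2, h0, h1]; ring
    · intro n hn ih
      have hA := hrec' (n - 1)
      have hB := hrec' n
      have e1 : n - 1 + 2 = n + 1 := by ring
      have e2 : n - 1 + 1 = n := by ring
      rw [e1, e2] at hA
      have e3 : n + 1 + 1 = n + 2 := by ring
      have e4 : n + 1 - 1 = n := by ring
      rw [e3, e4]
      linear_combination ih + S n * hB - S (n + 1) * hA
  intro n hn
  have hp1 := hpos (n - 1) (by omega)
  have hp2 := hpos n (by omega)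
  have e : n - 1 + 1 = n := by ring
  rw [e] at hp1
  have hpos1 : 0 < S (n - 1) := by linarith [hp1.1]
  have hpos2 : 0 < S n := by linarith [hp2.1]
  rw [div_lt_div_iff₀ hpos2 hpos1]
  nlinarith [hdet n hn]
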